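/- For every nonempty tree T, let γ_T denote the lexicographically smallest element of S_T (viewing each permutation σ ∈ S_T as the word (σ(1),…,σ(n))), with the convention that γ_| is the empty word. Then for T = T₁ ∨ T₂ with |T₁| = p and |T₂| = q, one has γ_T = (γ_{T₁}(1)+1, …, γ_{T₁}(p)+1, 1, γ_{T₂}(1)+p+1, …, γ_{T₂}(q)+p+1); in particular this word is a permutation belonging to S_T. -/

import Mathlib

/-- The minimum of `a :: l` (computed by folding `min`) is a member of `a :: l`. -/
lemma foldr_min_mem (a : ℤ) : ∀ l : List ℤ, l.foldr min a ∈ a :: l := by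
  intro l
  induction l with
  | nil => simp
  | cons b l ih =>
    simp only [List.foldr_cons]
    rcases min_choice b (l.foldr min a) with h | h
    · rw [h]; simp
    · rw [h]
      rcases List.mem_cons.mp ih with h' | h'
      · simp [h']
      · simp [h']

/-- The planar binary tree `φ(I)` associated to a list `I` of (distinct) integers:
`φ` of the empty list is the empty tree `|`, and `φ(I) = φ(I₁) ∨ φ(I₂)` where
`I = I₁ · (min I) · I₂` is the splitting of `I` at its minimal entry. -/
def phi : List ℤ → Tree Unit
  | [] => Tree.nil
  | a :: l =>
    Tree.node ()
      (phi ((a :: l).take ((a :: l).idxOf (l.foldr min a))))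
      (phi ((a :: l).drop ((a :: l).idxOf (l.foldr min a) + 1)))
termination_by l => l.length
decreasing_by
  · have hm := foldr_min_mem a l
    have hk := List.idxOf_lt_length_iff.mpr hm
    simp only [List.length_take, List.length_cons, List.foldr_attach] at *
    omega
  · simp only [List.length_drop, List.length_cons]
    omega

/-- The standardization of a list `I` of distinct integers: the list whose `j`-th entry is
the (1-indexed) position of `I_j` in the increasing ordering of the entries of `I`. -/
def stdz (I : List ℤ) : List ℤ :=
  I.map (fun x => ((I.filter (fun y => y < x)).length : ℤ) + 1)

/-- `l` is (the list of values of) a permutation of `{1, …, n}`. -/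
def IsPermList (n : ℕ) (l : List ℤ) : Prop :=
  l.Perm ((List.range n).map (fun k => (k : ℤ) + 1))

/-- `S_T`: the set of permutations `σ ∈ S_{|T|}` (identified with their lists of values
`(σ(1),…,σ(n))`) such that `φ(σ) = T`. -/
def STree (T : Tree Unit) : Set (List ℤ) :=
  {l | IsPermList T.numNodes l ∧ phi l = T}

/-! ### Auxiliary lemmas -/

lemma foldr_min_le (a : ℤ) (l : List ℤ) : ∀ y ∈ a :: l, l.foldr min a ≤ y := by
  induction l generalizing a with
  | nil => simp
  | cons b t ih =>
    intro y hy
    simp only [List.foldr_cons]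
    rcases List.mem_cons.mp hy with rfl | hy
    · exact le_trans (min_le_right _ _) (ih y y (by simp))
    · rcases List.mem_cons.mp hy with rfl | hy
      · exact min_le_left _ _
      · exact le_trans (min_le_right _ _) (ih a y (by simp [hy]))

lemma foldr_min_eq {a x : ℤ} {l : List ℤ} (hx : x ∈ a :: l) (h : ∀ y ∈ a :: l, x ≤ y) :
    l.foldr min a = x :=
  le_antisymm (foldr_min_le a l x hx) (h _ (foldr_min_mem a l))

lemma phi_cons (a : ℤ) (l : List ℤ) : phi (a :: l) =
    Tree.node ()
      (phi ((a :: l).take ((a :: l).idxOf (l.foldr min a))))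
      (phi ((a :: l).drop ((a :: l).idxOf (l.foldr min a) + 1))) := by
  rw [phi]

lemma numNodes_phi (l : List ℤ) : (phi l).numNodes = l.length := by
  induction l using phi.induct with
  | case1 => simp [phi]
  | case2 a l ih1 ih2 =>
    rw [phi_cons]
    have hk := List.idxOf_lt_length_iff.mpr (foldr_min_mem a l)
    simp only [List.foldr_attach] at ih1 ih2
    simp only [BinaryTree.numNodes, ih1, ih2, List.length_take, List.length_drop,
      List.length_cons] at *
    omega

lemma indexOf_map {f : ℤ → ℤ} {l : List ℤ} {a : ℤ} (ha : a ∈ l)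
    (hinj : ∀ x ∈ l, f x = f a → x = a) :
    (l.map f).idxOf (f a) = l.idxOf a := by
  induction l with
  | nil => simp
  | cons b t ih =>
    by_cases hb : b = a
    · subst hb; simp
    · have hfb : f b ≠ f a := fun h => hb (hinj b (by simp) h)
      rw [List.map_cons, List.idxOf_cons_ne _ hfb, List.idxOf_cons_ne _ hb]
      have ha' : a ∈ t := by
        rcases List.mem_cons.mp ha with h | h
        · exact absurd h.symm hb
        · exact h
      rw [ih ha' (fun x hx => hinj x (List.mem_cons_of_mem _ hx))]

lemma phi_map (f : ℤ → ℤ) : ∀ (n : ℕ) (l : List ℤ), l.length ≤ n →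
    (∀ x ∈ l, ∀ y ∈ l, (f x < f y ↔ x < y)) → phi (l.map f) = phi l := by
  intro n
  induction n with
  | zero =>
    intro l hl _
    rw [List.length_eq_zero_iff.mp (Nat.le_zero.mp hl)]
    rfl
  | succ n ih =>
    intro l hl hf
    match l with
    | [] => rfl
    | a :: t =>
      have hmem : t.foldr min a ∈ a :: t := foldr_min_mem a t
      have hmle : ∀ y ∈ a :: t, t.foldr min a ≤ y := foldr_min_le a t
      set m := t.foldr min a with hm
      have hfmono_le : ∀ x ∈ a :: t, ∀ y ∈ a :: t, x ≤ y → f x ≤ f y := by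
        intro x hx y hy hxy
        by_contra h
        push_neg at h
        exact absurd ((hf y hy x hx).mp h) (not_lt.mpr hxy)
      have hfoldr : (t.map f).foldr min (f a) = f m := by
        apply foldr_min_eq
        · have : f m ∈ (a :: t).map f := List.mem_map_of_mem hmem
          simpa using this
        · intro y hy
          have hy' : y ∈ (a :: t).map f := by simpa using hy
          obtain ⟨x, hx, rfl⟩ := List.mem_map.mp hy'
          exact hfmono_le m hmem x hx (hmle x hx)
      have hinj : ∀ x ∈ a :: t, f x = f m → x = m := by
        intro x hx hfx
        rcases lt_trichotomy x m with h | h | h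
        · exact absurd ((hf x hx m hmem).mpr h) (by rw [hfx]; exact lt_irrefl _)
        · exact h
        · exact absurd ((hf m hmem x hx).mpr h) (by rw [hfx]; exact lt_irrefl _)
      have hidx : ((a :: t).map f).idxOf (f m) = (a :: t).idxOf m :=
        indexOf_map hmem hinj
      have hk : (a :: t).idxOf m < (a :: t).length := List.idxOf_lt_length_iff.mpr hmem
      rw [List.map_cons, phi_cons, hfoldr, ← List.map_cons, hidx]
      rw [phi_cons (a := a) (l := t), ← hm]
      rw [← List.map_take, ← List.map_drop]
      congr 1
      · apply ih
        · simp only [List.length_take, List.length_cons] at *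
          omega
        · intro x hx y hy
          exact hf x (List.take_subset _ _ hx) y (List.take_subset _ _ hy)
      · apply ih
        · simp only [List.length_drop, List.length_cons] at *
          omega
        · intro x hx y hy
          exact hf x (List.drop_subset _ _ hx) y (List.drop_subset _ _ hy)

lemma phi_shift (c : ℤ) (l : List ℤ) : phi (l.map (· + c)) = phi l :=
  phi_map _ l.length l le_rfl (by intro x _ y _; constructor <;> intro <;> omega)

lemma coeM_list (L : List ℕ) : (L >>= fun a => pure ((a : ℤ))) = L.map (fun a : ℕ => (a : ℤ)) := by
  induction L with
  | nil => rfl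
  | cons b t ih => simp_all [List.flatMap_cons]

lemma isPermList_def (n : ℕ) (l : List ℤ) :
    IsPermList n l ↔ l.Perm ((List.range n).map (fun k : ℕ => (k : ℤ) + 1)) := by
  unfold IsPermList
  rw [coeM_list, List.map_map]
  rfl

lemma list_le_of_forall2 {l l' : List ℤ} (h : List.Forall₂ (· ≤ ·) l l') : l ≤ l' := by
  induction h with
  | nil => exact le_refl _
  | @cons a b l l' hab h ih =>
    rcases eq_or_lt_of_le hab with rfl | hl
    · exact List.cons_le_cons _ ih
    · exact le_of_lt (List.Lex.rel hl)

lemma lex_append {x : List ℤ} : ∀ {z : List ℤ}, x < z → x.length = z.length →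
    ∀ u v : List ℤ, x ++ u < z ++ v := by
  induction x with
  | nil =>
    intro z hxz hlen
    have hz : z = [] := List.length_eq_zero_iff.mp (by simpa using hlen.symm)
    subst hz
    exact absurd hxz (lt_irrefl _)
  | cons a x ih =>
    intro z hxz hlen u v
    cases z with
    | nil => simp at hlen
    | cons b z =>
      have h : List.Lex (· < ·) (a :: x) (b :: z) := hxz
      cases h with
      | rel h => exact List.Lex.rel h
      | cons h => exact List.Lex.cons (ih h (by simpa using hlen) u v)

lemma append_le_append_left (x : List ℤ) {u v : List ℤ} (h : u ≤ v) : x ++ u ≤ x ++ v := by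
  induction x with
  | nil => exact h
  | cons a x ih => exact List.cons_le_cons a ih

lemma lex_map_add {u v : List ℤ} (c : ℤ) (h : List.Lex (· < ·) u v) :
    List.Lex (· < ·) (u.map (· + c)) (v.map (· + c)) := by
  induction h with
  | nil => simp only [List.map_nil, List.map_cons]; exact List.Lex.nil
  | rel h => simp only [List.map_cons]; exact List.Lex.rel (by simpa using h)
  | cons _ ih => simp only [List.map_cons]; exact List.Lex.cons ih

lemma map_add_le {u v : List ℤ} (c : ℤ) (h : u ≤ v) : u.map (· + c) ≤ v.map (· + c) := by
  rcases eq_or_lt_of_le h with rfl | h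
  · exact le_refl _
  · exact le_of_lt (lex_map_add c h)

lemma isPermList_mem {n : ℕ} {l : List ℤ} (h : IsPermList n l) {x : ℤ} :
    x ∈ l ↔ 1 ≤ x ∧ x ≤ n := by
  rw [isPermList_def] at h
  rw [h.mem_iff]
  simp only [List.mem_map, List.mem_range]
  constructor
  · rintro ⟨k, hk, rfl⟩; omega
  · rintro ⟨h1, h2⟩; exact ⟨(x - 1).toNat, by omega, by omega⟩

lemma isPermList_length {n : ℕ} {l : List ℤ} (h : IsPermList n l) : l.length = n := by
  rw [isPermList_def] at h
  simpa using h.length_eq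

lemma isPermList_nodup {n : ℕ} {l : List ℤ} (h : IsPermList n l) : l.Nodup := by
  rw [isPermList_def] at h
  rw [h.nodup_iff]
  exact List.Nodup.map (fun a b hab => by omega) List.nodup_range

lemma rank_lt_iff {A : List ℤ} (hA : A.Nodup) {x y : ℤ} (hx : x ∈ A) (hy : y ∈ A) :
    (A.filter (fun z => z < x)).length < (A.filter (fun z => z < y)).length ↔ x < y := by
  constructor
  · intro h
    by_contra hxy
    push_neg at hxy
    have hle := (List.monotone_filter_right A
      (p := fun z => decide (z < y)) (q := fun z => decide (z < x))
      (fun a ha => by simp at ha ⊢; omega)).length_le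
    omega
  · intro hxy
    have hsub : (x :: A.filter (fun z => z < x)).Subperm (A.filter (fun z => z < y)) := by
      apply List.subperm_of_subset
      · exact List.nodup_cons.mpr ⟨by simp, hA.filter _⟩
      · intro z hz
        rcases List.mem_cons.mp hz with rfl | hz
        · simp only [List.mem_filter, decide_eq_true_eq]
          exact ⟨hx, hxy⟩
        · simp only [List.mem_filter, decide_eq_true_eq] at hz ⊢
          exact ⟨hz.1, by omega⟩
    have := hsub.length_le
    simp only [List.length_cons] at this
    omega

lemma rank_lt_length {A : List ℤ} {x : ℤ} (hx : x ∈ A) :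
    (A.filter (fun z => z < x)).length < A.length :=
  List.length_filter_lt_length_iff_exists.mpr ⟨x, hx, by simp⟩

lemma stdz_isPermList {A : List ℤ} (hA : A.Nodup) : IsPermList A.length (stdz A) := by
  rw [isPermList_def]
  unfold stdz
  have hnd : (A.map (fun x => ((A.filter (fun y => y < x)).length : ℤ) + 1)).Nodup := by
    apply List.Nodup.map_on ?_ hA
    intro x hx y hy hxy
    have h1 : ¬ (A.filter (fun z => z < x)).length < (A.filter (fun z => z < y)).length := by omega
    have h2 : ¬ (A.filter (fun z => z < y)).length < (A.filter (fun z => z < x)).length := by omega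
    rw [rank_lt_iff hA hx hy] at h1
    rw [rank_lt_iff hA hy hx] at h2
    omega
  have hsub : A.map (fun x => ((A.filter (fun y => y < x)).length : ℤ) + 1) ⊆
      (List.range A.length).map (fun k : ℕ => (k : ℤ) + 1) := by
    intro z hz
    obtain ⟨x, hx, rfl⟩ := List.mem_map.mp hz
    exact List.mem_map.mpr ⟨(A.filter (fun y => y < x)).length,
      List.mem_range.mpr (rank_lt_length hx), rfl⟩
  exact (List.subperm_of_subset hnd hsub).perm_of_length_le (by simp)

lemma phi_stdz {A : List ℤ} (hA : A.Nodup) : phi (stdz A) = phi A := by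
  apply phi_map _ A.length A le_rfl
  intro x hx y hy
  rw [show (((A.filter (fun z => z < x)).length : ℤ) + 1 <
      ((A.filter (fun z => z < y)).length : ℤ) + 1) ↔
      ((A.filter (fun z => z < x)).length < (A.filter (fun z => z < y)).length) from by omega]
  exact rank_lt_iff hA hx hy

lemma rank_add_two_le {A : List ℤ} (hA : A.Nodup) (h2 : ∀ x ∈ A, 2 ≤ x) {x : ℤ} (hx : x ∈ A) :
    ((A.filter (fun z => z < x)).length : ℤ) + 2 ≤ x := by
  have hnd : (x :: A.filter (fun z => z < x)).Nodup :=
    List.nodup_cons.mpr ⟨by simp, hA.filter _⟩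
  have hsubF : (x :: A.filter (fun z => z < x)).toFinset ⊆ Finset.Icc 2 x := by
    intro z hz
    rw [List.mem_toFinset] at hz
    rcases List.mem_cons.mp hz with rfl | hz
    · exact Finset.mem_Icc.mpr ⟨h2 z hx, le_refl _⟩
    · simp only [List.mem_filter, decide_eq_true_eq] at hz
      exact Finset.mem_Icc.mpr ⟨h2 z hz.1, le_of_lt hz.2⟩
  have hcard := Finset.card_le_card hsubF
  rw [List.toFinset_card_of_nodup hnd] at hcard
  rw [Int.card_Icc] at hcard
  simp only [List.length_cons] at hcard
  omega

lemma target_eq (p q : ℕ) :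
    (List.range (p + q + 1)).map (fun k : ℕ => (k : ℤ) + 1) =
      1 :: ((List.range p).map (fun k : ℕ => ((k : ℤ) + 1) + 1) ++
        (List.range q).map (fun k : ℕ => ((k : ℤ) + 1) + ((p : ℤ) + 1))) := by
  rw [show p + q + 1 = 1 + (p + q) from by omega, List.range_add, List.range_add]
  rw [show List.range 1 = [0] from rfl]
  simp only [List.map_append, List.map_map, List.map_cons, List.map_nil,
    List.cons_append, List.nil_append, Function.comp_def]
  norm_num
  congr 1
  · apply List.map_congr_left; intro a _; push_cast; ring
  · apply List.map_congr_left; intro a _; push_cast; ring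

/-- Recursive description of the lexicographically smallest element `γ_T` of `S_T`
(lists are compared by the lexicographic order, entries from left to right):
if `γ₁` is the lexicographically smallest element of `S_{T₁}` and `γ₂` the one of
`S_{T₂}` (with `|T₁| = p`), then the word
`(γ₁(1)+1, …, γ₁(p)+1, 1, γ₂(1)+p+1, …, γ₂(q)+p+1)` is a permutation belonging to
`S_{T₁ ∨ T₂}`, and it is the lexicographically smallest element of `S_{T₁ ∨ T₂}`. -/
theorem lexSmallest_STree_node (T₁ T₂ : Tree Unit) (γ₁ γ₂ : List ℤ)
    (hγ₁ : γ₁ ∈ STree T₁) (hmin₁ : ∀ τ ∈ STree T₁, γ₁ ≤ τ)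
    (hγ₂ : γ₂ ∈ STree T₂) (hmin₂ : ∀ τ ∈ STree T₂, γ₂ ≤ τ) :
    (γ₁.map (· + 1) ++ 1 :: γ₂.map (· + ((T₁.numNodes : ℤ) + 1)))
        ∈ STree (Tree.node () T₁ T₂) ∧
      ∀ τ ∈ STree (Tree.node () T₁ T₂),
        (γ₁.map (· + 1) ++ 1 :: γ₂.map (· + ((T₁.numNodes : ℤ) + 1))) ≤ τ := by
  obtain ⟨hperm₁, hphi₁⟩ := hγ₁
  obtain ⟨hperm₂, hphi₂⟩ := hγ₂
  set p := T₁.numNodes with hp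
  set q := T₂.numNodes with hq
  have hlen₁ : γ₁.length = p := isPermList_length hperm₁
  set γ₁' := γ₁.map (· + 1) with hγ₁'def
  set γ₂' := γ₂.map (· + ((p : ℤ) + 1)) with hγ₂'def
  set W := γ₁' ++ 1 :: γ₂' with hWdef
  have hlen₁' : γ₁'.length = p := by rw [hγ₁'def, List.length_map, hlen₁]
  have hmem₁ : ∀ x ∈ γ₁, 1 ≤ x ∧ x ≤ (p : ℤ) := fun x hx => (isPermList_mem hperm₁).mp hx
  have hmem₂ : ∀ x ∈ γ₂, 1 ≤ x ∧ x ≤ (q : ℤ) := fun x hx => (isPermList_mem hperm₂).mp hx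
  have hWpos : ∀ y ∈ W, (1 : ℤ) ≤ y := by
    intro y hy
    rw [hWdef, List.mem_append, List.mem_cons] at hy
    rcases hy with hy | hy | hy
    · rw [hγ₁'def] at hy
      obtain ⟨x, hx, rfl⟩ := List.mem_map.mp hy
      have := (hmem₁ x hx).1; omega
    · omega
    · rw [hγ₂'def] at hy
      obtain ⟨x, hx, rfl⟩ := List.mem_map.mp hy
      have := (hmem₂ x hx).1; omega
  have h1W : (1 : ℤ) ∈ W := by rw [hWdef]; simp
  have hRp : γ₁'.Perm ((List.range p).map (fun k : ℕ => ((k : ℤ) + 1) + 1)) := by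
    rw [hγ₁'def]
    have h := ((isPermList_def _ _).mp hperm₁).map (· + 1)
    rwa [List.map_map, Function.comp_def] at h
  have hRq : γ₂'.Perm ((List.range q).map (fun k : ℕ => ((k : ℤ) + 1) + ((p : ℤ) + 1))) := by
    rw [hγ₂'def]
    have h := ((isPermList_def _ _).mp hperm₂).map (· + ((p : ℤ) + 1))
    rwa [List.map_map, Function.comp_def] at h
  have hpermW : IsPermList (p + q + 1) W := by
    rw [isPermList_def, target_eq]
    refine List.Perm.trans ?_ (List.Perm.cons _ (List.Perm.append hRp hRq))
    rw [hWdef]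
    exact List.perm_middle
  have h1notγ₁' : (1 : ℤ) ∉ γ₁' := by
    intro h
    rw [hγ₁'def] at h
    obtain ⟨x, hx, hx1⟩ := List.mem_map.mp h
    have := (hmem₁ x hx).1; omega
  have hidxW : W.idxOf 1 = p := by
    rw [hWdef, List.idxOf_append_of_notMem h1notγ₁', List.idxOf_cons_self]
    simp [hlen₁']
  have htakeW : W.take p = γ₁' := by rw [hWdef]; exact List.take_left' hlen₁'
  have hdropW : W.drop (p + 1) = γ₂' := by
    rw [hWdef, List.append_cons]
    exact List.drop_left' (by simp [hlen₁'])
  have hphiW : phi W = Tree.node () T₁ T₂ := by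
    obtain ⟨a, l, hal⟩ := List.exists_cons_of_ne_nil (show W ≠ [] from by rw [hWdef]; simp)
    rw [hal, phi_cons]
    have hfold : l.foldr min a = 1 := foldr_min_eq (hal ▸ h1W) (fun y hy => hWpos y (hal ▸ hy))
    rw [hfold, ← hal, hidxW, htakeW, hdropW]
    rw [hγ₁'def, hγ₂'def, phi_shift, phi_shift, hphi₁, hphi₂]
  have hnn : (Tree.node () T₁ T₂).numNodes = p + q + 1 := by rw [hp, hq]; rfl
  constructor
  · refine ⟨?_, hphiW⟩
    rw [hnn]
    exact hpermW
  · rintro τ ⟨hτperm, hτphi⟩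
    rw [hnn] at hτperm
    have hτlen : τ.length = p + q + 1 := isPermList_length hτperm
    have hτnodup : τ.Nodup := isPermList_nodup hτperm
    have hτpos : ∀ y ∈ τ, (1 : ℤ) ≤ y := fun y hy => ((isPermList_mem hτperm).mp hy).1
    have h1τ : (1 : ℤ) ∈ τ := (isPermList_mem hτperm).mpr ⟨le_refl _, by push_cast; omega⟩
    obtain ⟨a, l, hal⟩ := List.exists_cons_of_ne_nil
      (show τ ≠ [] from by intro h; rw [h] at hτlen; simp at hτlen)
    rw [hal, phi_cons] at hτphi
    have hfold : l.foldr min a = 1 := foldr_min_eq (hal ▸ h1τ) (fun y hy => hτpos y (hal ▸ hy))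
    rw [hfold, ← hal] at hτphi
    rw [BinaryTree.node.injEq] at hτphi
    obtain ⟨-, hA, hB⟩ := hτphi
    have hklt : τ.idxOf 1 < τ.length := List.idxOf_lt_length_iff.mpr h1τ
    have hkp : τ.idxOf 1 = p := by
      have h := congrArg Tree.numNodes hA
      rw [numNodes_phi, List.length_take] at h
      omega
    rw [hkp] at hA hB
    have hget : ∀ h : p < τ.length, τ[p]'h = 1 := by
      intro h
      simp only [← hkp]
      exact List.getElem_idxOf hklt
    have hτsplit : τ = τ.take p ++ 1 :: τ.drop (p + 1) := by
      conv_lhs => rw [← List.take_append_drop p τ]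
      congr 1
      rw [List.drop_eq_getElem_cons (show p < τ.length from by omega),
        hget (show p < τ.length from by omega)]
    set A := τ.take p with hAdef
    set B := τ.drop (p + 1) with hBdef
    have hAlen : A.length = p := by rw [hAdef, List.length_take]; omega
    have hnod : (A ++ 1 :: B).Nodup := hτsplit ▸ hτnodup
    rw [List.nodup_append] at hnod
    obtain ⟨hAnodup, hconsB, hdisj⟩ := hnod
    have h1A : (1 : ℤ) ∉ A := fun h => hdisj 1 h 1 (by simp) rfl
    have hA2 : ∀ x ∈ A, 2 ≤ x := by
      intro x hx
      have hxτ : x ∈ τ := by rw [hτsplit]; exact List.mem_append_left _ hx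
      have := hτpos x hxτ
      have hne : x ≠ 1 := fun h => h1A (h ▸ hx)
      omega
    rw [hτsplit, hWdef]
    by_cases hcase : γ₁' = A
    · rw [← hcase]
      apply append_le_append_left
      apply List.cons_le_cons
      have hτperm' := (isPermList_def _ _).mp hτperm
      rw [target_eq, hτsplit] at hτperm'
      have h2 := (List.perm_middle.symm.trans hτperm').cons_inv
      rw [← hcase] at h2
      have h3 := (hRp.symm.append (List.Perm.refl B)).trans h2
      have hBperm := (List.perm_append_left_iff _).mp h3
      set B' := B.map (· + (-((p : ℤ) + 1))) with hB'def
      have hB'perm : IsPermList q B' := by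
        rw [isPermList_def, hB'def]
        refine (hBperm.map _).trans ?_
        rw [List.map_map]
        exact List.Perm.of_eq (List.map_congr_left (fun a _ => by simp only [Function.comp_apply]; ring))
      have hphiB' : phi B' = T₂ := by rw [hB'def, phi_shift]; exact hB
      have hle := hmin₂ B' ⟨hB'perm, hphiB'⟩
      have hle' := map_add_le ((p : ℤ) + 1) hle
      have hBid : B'.map (· + ((p : ℤ) + 1)) = B := by
        rw [hB'def, List.map_map]
        have hcomp : ((fun x : ℤ => x + ((p : ℤ) + 1)) ∘ (fun x : ℤ => x + (-((p : ℤ) + 1)))) =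
            id := by funext x; simp only [Function.comp_apply, id_eq]; ring
        rw [hcomp, List.map_id]
      rw [hBid] at hle'
      exact hle'
    · have hstd_perm : IsPermList p (stdz A) := hAlen ▸ stdz_isPermList hAnodup
      have hstd_phi : phi (stdz A) = T₁ := by rw [phi_stdz hAnodup]; exact hA
      have hγle : γ₁ ≤ stdz A := hmin₁ _ ⟨hstd_perm, hstd_phi⟩
      have hmap2 : γ₁' ≤ (stdz A).map (· + 1) := map_add_le 1 hγle
      have hf2 : List.Forall₂ (· ≤ ·) ((stdz A).map (· + 1)) A := by
        simp only [stdz, List.map_map, List.forall₂_map_left_iff, List.forall₂_same,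
          Function.comp]
        intro x hx
        have := rank_add_two_le hAnodup hA2 hx
        omega
      have hlt : γ₁' < A := lt_of_le_of_ne (le_trans hmap2 (list_le_of_forall2 hf2)) hcase
      exact le_of_lt (lex_append hlt (by rw [hlen₁', hAlen]) _ _)
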